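/- arXiv:1505.05450 — 3 statements merged into one kernel-verified Lean document; each statement's English description precedes it below -/
import Mathlib

section
/- Let ẙ₁,…,ẙ_N ∈ ℝ⁴ be unit vectors with ẙᵢ = [ẙ̄ᵢ; ẙ_{i,4}], and k₁,…,k_N > 0. Define the 3×3 matrices G := Σᵢ kᵢ (ẙ̄ᵢ)_×², S := Σᵢ kᵢ ẙ_{i,4} (ẙ̄ᵢ)_×, D := Σᵢ kᵢ ẙ_{i,4}² (I₃ − ẙ̄ᵢẙ̄ᵢᵀ), and H := S G⁻¹ S − D. Assume G and H are invertible. If ε_p, ε_r ∈ ℝ³ satisfy S ε_p = G ε_r and D ε_p = S ε_r, then ε_p = 0 and ε_r = 0. -/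
open Matrix BigOperators

noncomputable section

/-- The Euclidean norm of a vector in `ℝⁿ`. -/
def enorm {n : ℕ} (x : Fin n → ℝ) : ℝ := Real.sqrt (∑ i, x i ^ 2)

/-- Normalization of a vector: `x / |x|`. -/
def nrm {n : ℕ} (x : Fin n → ℝ) : Fin n → ℝ := (_root_.enorm x)⁻¹ • x

/-- `R ∈ SO(3)`: rotation matrices. -/
def SO3 (R : Matrix (Fin 3) (Fin 3) ℝ) : Prop := Rᵀ * R = 1 ∧ R.det = 1

/-- The 4×4 block matrix `[[M, m],[0ᵀ, 0]]`. -/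
def blk (M : Matrix (Fin 3) (Fin 3) ℝ) (m : Fin 3 → ℝ) : Matrix (Fin 4) (Fin 4) ℝ :=
  fun i j =>
    if h : (i : ℕ) < 3 then
      if h' : (j : ℕ) < 3 then M ⟨i, h⟩ ⟨j, h'⟩ else m ⟨i, h⟩
    else 0

/-- The 4×4 block matrix `[[R, p],[0ᵀ, 1]]`. -/
def toSE3 (R : Matrix (Fin 3) (Fin 3) ℝ) (p : Fin 3 → ℝ) : Matrix (Fin 4) (Fin 4) ℝ :=
  fun i j =>
    if h : (i : ℕ) < 3 then
      if h' : (j : ℕ) < 3 then R ⟨i, h⟩ ⟨j, h'⟩ else p ⟨i, h⟩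
    else if (j : ℕ) < 3 then 0 else 1

/-- The Special Euclidean group SE(3), as a subset of `ℝ^{4×4}`. -/
def SE3 : Set (Matrix (Fin 4) (Fin 4) ℝ) := {X | ∃ R p, SO3 R ∧ X = toSE3 R p}

/-- The skew-symmetric matrix `ω_×` associated with the cross product by `ω`. -/
def crossMat (ω : Fin 3 → ℝ) : Matrix (Fin 3) (Fin 3) ℝ :=
  !![0, -ω 2, ω 1; ω 2, 0, -ω 0; -ω 1, ω 0, 0]

/-- The cross product on `ℝ³`. -/
def cross3 (u v : Fin 3 → ℝ) : Fin 3 → ℝ :=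
  ![u 1 * v 2 - u 2 * v 1, u 2 * v 0 - u 0 * v 2, u 0 * v 1 - u 1 * v 0]

/-- The Lie algebra se(3), as a subset of `ℝ^{4×4}`. -/
def se3 : Set (Matrix (Fin 4) (Fin 4) ℝ) := {A | ∃ ω V, A = blk (crossMat ω) V}

/-- The projection `P : ℝ^{4×4} → se(3)`:
`P([[M₁, m₂],[m₃ᵀ, m₄]]) = [[(M₁ − M₁ᵀ)/2, m₂],[0ᵀ, 0]]`. -/
def projP (M : Matrix (Fin 4) (Fin 4) ℝ) : Matrix (Fin 4) (Fin 4) ℝ :=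
  fun i j =>
    if (i : ℕ) < 3 then (if (j : ℕ) < 3 then (M i j - M j i) / 2 else M i j) else 0

/-- The trace (Frobenius) inner product `⟨M₁, M₂⟩ = tr(M₁ᵀ M₂)`. -/
def mip (M₁ M₂ : Matrix (Fin 4) (Fin 4) ℝ) : ℝ := (M₁ᵀ * M₂).trace

/-- First three components of a vector in `ℝ⁴`. -/
def vbar (x : Fin 4 → ℝ) : Fin 3 → ℝ := fun i => x (Fin.castSucc i)

/-- The vector `[v; c] ∈ ℝ⁴`. -/
def vec4 (v : Fin 3 → ℝ) (c : ℝ) : Fin 4 → ℝ := Fin.snoc v c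

/-- The innovation term `Δ(X̂, Y) = −P(Σᵢ kᵢ (I₄ − eᵢeᵢᵀ) ẙᵢ eᵢᵀ)` where
`eᵢ = X̂yᵢ/|X̂yᵢ|`. -/
def innov {N : ℕ} (k : Fin N → ℝ) (ystar y : Fin N → Fin 4 → ℝ)
    (Xh : Matrix (Fin 4) (Fin 4) ℝ) : Matrix (Fin 4) (Fin 4) ℝ :=
  -projP (∑ i, k i •
    ((1 - vecMulVec (nrm (Xh *ᵥ y i)) (nrm (Xh *ᵥ y i))) *
      vecMulVec (ystar i) (nrm (Xh *ᵥ y i))))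

/-- the linearized stationarity argument: with
`G = Σᵢ kᵢ (ẙ̄ᵢ)_×²`, `S = Σᵢ kᵢ ẙ_{i,4} (ẙ̄ᵢ)_×`,
`D = Σᵢ kᵢ ẙ_{i,4}² (I₃ − ẙ̄ᵢẙ̄ᵢᵀ)` and `H = S G⁻¹ S − D` invertible,
the system `S ε_p = G ε_r`, `D ε_p = S ε_r` only has the solution `ε_p = ε_r = 0`. -/
theorem linearized_stationarity {N : ℕ} (ystar : Fin N → Fin 4 → ℝ)
    (hunit : ∀ i, _root_.enorm (ystar i) = 1) (k : Fin N → ℝ) (hk : ∀ i, 0 < k i)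
    (G S D H : Matrix (Fin 3) (Fin 3) ℝ)
    (hG : G = ∑ i, k i • (crossMat (vbar (ystar i)) * crossMat (vbar (ystar i))))
    (hS : S = ∑ i, (k i * ystar i 3) • crossMat (vbar (ystar i)))
    (hD : D = ∑ i, (k i * (ystar i 3) ^ 2) •
      ((1 : Matrix (Fin 3) (Fin 3) ℝ) - vecMulVec (vbar (ystar i)) (vbar (ystar i))))
    (hH : H = S * G⁻¹ * S - D)
    (hGinv : IsUnit G.det) (hHinv : IsUnit H.det)
    (εp εr : Fin 3 → ℝ) (h1 : S *ᵥ εp = G *ᵥ εr) (h2 : D *ᵥ εp = S *ᵥ εr) :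
    εp = 0 ∧ εr = 0 := by
  have hεr : εr = G⁻¹ *ᵥ (S *ᵥ εp) := by
    rw [h1, Matrix.mulVec_mulVec, Matrix.nonsing_inv_mul G hGinv, Matrix.one_mulVec]
  have hHp : H *ᵥ εp = 0 := by
    rw [hH, Matrix.sub_mulVec, h2, hεr]
    simp [Matrix.mulVec_mulVec, Matrix.mul_assoc]
  have hεp : εp = 0 := by
    have := congrArg (fun v => H⁻¹ *ᵥ v) hHp
    simpa [Matrix.mulVec_mulVec, Matrix.nonsing_inv_mul H hHinv] using this
  refine ⟨hεp, ?_⟩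
  have : G *ᵥ εr = 0 := by rw [← h1, hεp, Matrix.mulVec_zero]
  have := congrArg (fun v => G⁻¹ *ᵥ v) this
  simpa [Matrix.mulVec_mulVec, Matrix.nonsing_inv_mul G hGinv] using this
end
end

section
/- Let M ∈ ℝ^{4×4}, let X̂ ∈ ℝ^{4×4} be invertible, and let B ∈ se(3). Then ⟨−M, X̂BX̂⁻¹ + P(M)⟩ + ⟨P(X̂ᵀ M X̂⁻ᵀ), B⟩ = −‖P(M)‖². -/
open Matrix BigOperators

noncomputable section

lemma fv0 : ((0:Fin 4):ℕ) = 0 := rfl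
lemma fv1 : ((1:Fin 4):ℕ) = 1 := rfl
lemma fv2 : ((2:Fin 4):ℕ) = 2 := rfl
lemma fv3 : ((3:Fin 4):ℕ) = 3 := rfl

lemma mip_sum (A B : Matrix (Fin 4) (Fin 4) ℝ) :
    mip A B = ∑ i, ∑ j, A i j * B i j := by
  simp [mip, Matrix.trace, Matrix.mul_apply, Matrix.diag, Matrix.transpose_apply]
  rw [Finset.sum_comm]

set_option maxHeartbeats 1000000 in
lemma mip_projP_left (A B : Matrix (Fin 4) (Fin 4) ℝ) (hB : B ∈ se3) :
    mip (projP A) B = mip A B := by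
  obtain ⟨ω, V, rfl⟩ := hB
  simp [mip_sum, Fin.sum_univ_four, projP, blk, crossMat, fv0, fv1, fv2, fv3]
  ring

lemma mip_conj (A B X : Matrix (Fin 4) (Fin 4) ℝ) :
    mip (Xᵀ * A * (X⁻¹)ᵀ) B = mip A (X * B * X⁻¹) := by
  simp only [mip, Matrix.transpose_mul, Matrix.transpose_transpose, Matrix.mul_assoc]
  rw [Matrix.trace_mul_comm]
  simp [Matrix.mul_assoc]

lemma mip_self_projP (M : Matrix (Fin 4) (Fin 4) ℝ) :
    mip M (projP M) = mip (projP M) (projP M) := by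
  simp [mip_sum, Fin.sum_univ_four, projP, fv0, fv1, fv2, fv3]
  ring

/-- the Lyapunov-derivative identity
`⟨−M, X̂BX̂⁻¹ + P(M)⟩ + ⟨P(X̂ᵀMX̂⁻ᵀ), B⟩ = −‖P(M)‖²` for `B ∈ se(3)` and invertible `X̂`. -/
theorem lyapunov_derivative_identity (M Xh : Matrix (Fin 4) (Fin 4) ℝ)
    (hXh : IsUnit Xh.det) (B : Matrix (Fin 4) (Fin 4) ℝ) (hB : B ∈ se3) :
    mip (-M) (Xh * B * Xh⁻¹ + projP M) + mip (projP (Xhᵀ * M * (Xh⁻¹)ᵀ)) B =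
      -mip (projP M) (projP M) := by
  have h1 := mip_projP_left (Xhᵀ * M * (Xh⁻¹)ᵀ) B hB
  have h2 := mip_conj M B Xh
  have h3 := mip_self_projP M
  have h4 : mip (-M) (Xh * B * Xh⁻¹ + projP M)
      = -(mip M (Xh * B * Xh⁻¹)) - mip M (projP M) := by
    simp only [mip_sum, Matrix.neg_apply, Matrix.add_apply, mul_add, neg_mul,
      neg_add, Finset.sum_add_distrib, Finset.sum_neg_distrib]
    ring
  rw [h4, h1, h2, h3]; ring
end
end

section
/- Let X, X̂ ∈ SE(3), let ẙ₁,…,ẙ_N ∈ ℝ⁴ be unit vectors, and k₁,…,k_N > 0. Define yᵢ := X⁻¹ẙᵢ/|X⁻¹ẙᵢ| and E := X̂X⁻¹. Then Δ(X̂, (y₁,…,y_N)) = Δ(E, (ẙ₁,…,ẙ_N)); i.e. the innovation term evaluated on the measured outputs depends only on the group error E, so the error dynamics Ė = −Δ(E, Y̊)E are autonomous. -/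
open Matrix BigOperators

noncomputable section

lemma enorm_smul_real {n : ℕ} (c : ℝ) (x : Fin n → ℝ) : _root_.enorm (c • x) = |c| * _root_.enorm x := by
  unfold _root_.enorm
  have : ∑ i, (c • x) i ^ 2 = c ^ 2 * ∑ i, x i ^ 2 := by
    simp [Finset.mul_sum, mul_pow]
  rw [this, Real.sqrt_mul (sq_nonneg c), Real.sqrt_sq_eq_abs]

lemma nrm_smul {n : ℕ} (c : ℝ) (hc : 0 < c) (x : Fin n → ℝ) : nrm (c • x) = nrm x := by
  unfold nrm
  rw [enorm_smul_real, abs_of_pos hc, smul_smul, mul_inv]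
  congr 1
  rcases eq_or_ne (_root_.enorm x) 0 with h | h
  · simp [h]
  · field_simp

lemma enorm_pos_real {n : ℕ} {x : Fin n → ℝ} (hx : x ≠ 0) : 0 < _root_.enorm x := by
  unfold _root_.enorm
  apply Real.sqrt_pos.mpr
  have hnn : 0 ≤ ∑ i, x i ^ 2 := Finset.sum_nonneg fun i _ => sq_nonneg _
  rcases hnn.lt_or_eq with h | h
  · exact h
  · exfalso
    apply hx
    funext i
    have h0 := (Finset.sum_eq_zero_iff_of_nonneg (fun i _ => sq_nonneg (x i))).mp h.symm i
      (Finset.mem_univ i)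
    exact pow_eq_zero_iff two_ne_zero |>.mp h0

lemma det_toSE3 (R : Matrix (Fin 3) (Fin 3) ℝ) (p : Fin 3 → ℝ) : (toSE3 R p).det = R.det := by
  rw [Matrix.det_succ_row _ 3, Fin.sum_univ_four]
  norm_num [toSE3, show ((3:Fin 4):ℕ) = 3 from rfl]
  congr 1
  ext i j
  fin_cases i <;> fin_cases j <;> simp [toSE3, Fin.succAbove] <;> rfl

/-- with measured outputs `yᵢ = X⁻¹ẙᵢ/|X⁻¹ẙᵢ|` and group error
`E = X̂X⁻¹`, the innovation satisfies `Δ(X̂, (y₁,…,y_N)) = Δ(E, (ẙ₁,…,ẙ_N))`, so the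
error dynamics are autonomous. -/
theorem innovation_depends_on_group_error {N : ℕ} (X Xh : Matrix (Fin 4) (Fin 4) ℝ)
    (hX : X ∈ SE3) (hXh : Xh ∈ SE3) (ystar : Fin N → Fin 4 → ℝ)
    (hunit : ∀ i, _root_.enorm (ystar i) = 1) (k : Fin N → ℝ) (hk : ∀ i, 0 < k i) :
    innov k ystar (fun i => nrm (X⁻¹ *ᵥ ystar i)) Xh =
      innov k ystar ystar (Xh * X⁻¹) := by
  obtain ⟨R, p, hR, rfl⟩ := hX
  have hdet : IsUnit (toSE3 R p).det := by
    rw [det_toSE3, hR.2]; exact isUnit_one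
  have hXinv : toSE3 R p * (toSE3 R p)⁻¹ = 1 := Matrix.mul_nonsing_inv _ hdet
  have key : ∀ i, nrm (Xh *ᵥ nrm ((toSE3 R p)⁻¹ *ᵥ ystar i)) =
      nrm ((Xh * (toSE3 R p)⁻¹) *ᵥ ystar i) := by
    intro i
    have hy0 : ystar i ≠ 0 := by
      intro h
      have := hunit i
      rw [h] at this
      simp [_root_.enorm] at this
    have hv0 : (toSE3 R p)⁻¹ *ᵥ ystar i ≠ 0 := by
      intro h
      apply hy0
      have : toSE3 R p *ᵥ ((toSE3 R p)⁻¹ *ᵥ ystar i) = toSE3 R p *ᵥ 0 := by rw [h]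
      rwa [Matrix.mulVec_mulVec, hXinv, Matrix.one_mulVec, Matrix.mulVec_zero] at this
    have hpos : 0 < (_root_.enorm ((toSE3 R p)⁻¹ *ᵥ ystar i))⁻¹ := inv_pos.mpr (enorm_pos_real hv0)
    rw [← Matrix.mulVec_mulVec]
    show nrm (Xh *ᵥ ((_root_.enorm ((toSE3 R p)⁻¹ *ᵥ ystar i))⁻¹ • ((toSE3 R p)⁻¹ *ᵥ ystar i))) = _
    rw [Matrix.mulVec_smul, nrm_smul _ hpos]
  simp only [innov, key]
end
end
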